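/- Let W be a real Hilbert space, J : W×W→ℝ a continuous symmetric bilinear form, and V ⊆ W a closed subspace of finite codimension. Then J is coercive on W if and only if J is coercive on V and J(δ,δ)>0 for every nonzero δ∈W which is J-orthogonal to V. (Proposition of Section 4.2, after Hestenes.) -/

import Mathlib

open Set

/-- **Hestenes' proposition** (Section 4.2): a continuous symmetric bilinear form `J` on a
real Hilbert space `W` is coercive if and only if it is coercive on a closed subspace `V`
of finite codimension and positive on the nonzero vectors that are `J`-orthogonal to `V`. -/
theorem coercive_iff_coercive_on_finite_codim_subspace_and_pos_on_Jorthogonal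
    {W : Type*} [NormedAddCommGroup W] [InnerProductSpace ℝ W] [CompleteSpace W]
    (J : W →L[ℝ] W →L[ℝ] ℝ) (hJsymm : ∀ x y : W, J x y = J y x)
    (V : Submodule ℝ W) (hVclosed : IsClosed (V : Set W))
    (hVcodim : FiniteDimensional ℝ (W ⧸ V)) :
    (∃ ρ > 0, ∀ δ : W, ρ * ‖δ‖ ^ 2 ≤ J δ δ) ↔
      ((∃ ρ > 0, ∀ δ ∈ V, ρ * ‖δ‖ ^ 2 ≤ J δ δ) ∧
        ∀ δ : W, δ ≠ 0 → (∀ v ∈ V, J δ v = 0) → 0 < J δ δ) := by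
  constructor
  · rintro ⟨ρ, hρ, h⟩
    refine ⟨⟨ρ, hρ, fun δ _ => h δ⟩, fun δ hδ _ => ?_⟩
    have hn : 0 < ‖δ‖ := norm_pos_iff.mpr hδ
    have : 0 < ρ * ‖δ‖ ^ 2 := by positivity
    exact this.trans_le (h δ)
  · rintro ⟨⟨ρ, hρpos, hρ⟩, hpos⟩
    haveI : CompleteSpace V := hVclosed.completeSpace_coe
    -- the restricted bilinear form
    set B : V →L[ℝ] V →L[ℝ] ℝ := ((J.comp V.subtypeL).flip).comp V.subtypeL with hBdef
    have hB : ∀ u v : V, B u v = J (v : W) (u : W) := fun u v => rfl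
    have hBcoer : IsCoercive B := by
      refine ⟨ρ, hρpos, fun u => ?_⟩
      have := hρ (u : W) u.2
      rw [hB]
      calc ρ * ‖u‖ * ‖u‖ = ρ * ‖(u : W)‖ ^ 2 := by
            rw [Submodule.coe_norm, sq, mul_assoc]
        _ ≤ J (u : W) (u : W) := this
    -- J-orthogonal projection onto V via Lax-Milgram
    have proj : ∀ w : W, ∃ p : V, ∀ v : V, J (w - (p : W)) (v : W) = 0 := by
      intro w
      let f : V →L[ℝ] ℝ := (J w).comp V.subtypeL
      let z : V := (InnerProductSpace.toDual ℝ V).symm f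
      let p : V := hBcoer.continuousLinearEquivOfBilin.symm z
      refine ⟨p, fun v => ?_⟩
      have h1 : inner (𝕜 := ℝ) (hBcoer.continuousLinearEquivOfBilin p) v = B p v :=
        hBcoer.continuousLinearEquivOfBilin_apply p v
      have h2 : hBcoer.continuousLinearEquivOfBilin p = z := by
        simp [p]
      have h3 : inner (𝕜 := ℝ) z v = f v := InnerProductSpace.toDual_symm_apply
      have h4 : J (v : W) (p : W) = J w (v : W) := by
        rw [← hB, ← h1, h2, h3]; rfl
      have h5 : J (p : W) (v : W) = J w (v : W) := by rw [hJsymm]; exact h4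
      simp [map_sub, h5]
    -- the J-orthogonal complement of V
    let U : Submodule ℝ W :=
      { carrier := {δ | ∀ v ∈ V, J δ v = 0}
        add_mem' := fun ha hb v hv => by
          simp only [map_add, ContinuousLinearMap.add_apply, ha v hv, hb v hv, add_zero]
        zero_mem' := fun v hv => by simp
        smul_mem' := fun c x hx v hv => by
          simp only [map_smul, ContinuousLinearMap.smul_apply, hx v hv, smul_zero] }
    have hUmem : ∀ {u : W}, u ∈ U ↔ ∀ v ∈ V, J u v = 0 := Iff.rfl
    -- U is finite dimensional
    haveI hUfin : FiniteDimensional ℝ U := by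
      refine FiniteDimensional.of_injective (V.mkQ.comp U.subtype) ?_
      rw [← LinearMap.ker_eq_bot, LinearMap.ker_eq_bot']
      rintro ⟨u, hu⟩ h
      have huV : u ∈ V := by
        have h' : V.mkQ u = 0 := h
        rw [Submodule.mkQ_apply, Submodule.Quotient.mk_eq_zero] at h'
        exact h'
      have hJu : J u u = 0 := hu u huV
      have : ρ * ‖u‖ ^ 2 ≤ 0 := hJu ▸ hρ u huV
      have hu0 : u = 0 := by
        by_contra hne
        have : 0 < ρ * ‖u‖ ^ 2 := by
          have := norm_pos_iff.mpr hne
          positivity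
        linarith
      exact Subtype.ext hu0
    -- J is coercive on U (positive definite on a finite-dim space)
    have hUc : ∃ c > 0, ∀ u ∈ U, c * ‖u‖ ^ 2 ≤ J u u := by
      by_cases hU : ∀ u ∈ U, u = (0 : W)
      · refine ⟨1, one_pos, fun u hu => ?_⟩
        rw [hU u hu]; simp
      · push_neg at hU
        obtain ⟨u0, hu0U, hu0⟩ := hU
        haveI : Nontrivial U := ⟨⟨u0, hu0U⟩, 0, by simp [Subtype.ext_iff, hu0]⟩
        have hScomp : IsCompact (Metric.sphere (0 : U) 1) := isCompact_sphere 0 1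
        have hSne : (Metric.sphere (0 : U) 1).Nonempty :=
          NormedSpace.sphere_nonempty.mpr zero_le_one
        have hqcont : Continuous fun u : U => J (u : W) (u : W) :=
          (J.continuous.comp continuous_subtype_val).clm_apply continuous_subtype_val
        obtain ⟨x, hxS, hxmin⟩ := hScomp.exists_isMinOn hSne hqcont.continuousOn
        have hxnorm : ‖x‖ = 1 := by simpa using hxS
        have hxne : (x : W) ≠ 0 := by
          intro h
          have : x = 0 := Subtype.ext h
          rw [this] at hxnorm; simp at hxnorm
        have hc : 0 < J (x : W) (x : W) := hpos x hxne (x.2)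
        refine ⟨J (x : W) (x : W), hc, fun u hu => ?_⟩
        rcases eq_or_ne u 0 with rfl | hune
        · simp
        · have hnu : 0 < ‖u‖ := norm_pos_iff.mpr hune
          set a : ℝ := ‖u‖⁻¹ with ha
          have hapos : 0 < a := inv_pos.mpr hnu
          set u' : U := a • (⟨u, hu⟩ : U) with hu'
          have hu'S : u' ∈ Metric.sphere (0 : U) 1 := by
            simp only [mem_sphere_iff_norm, sub_zero, hu', norm_smul]
            rw [Real.norm_eq_abs, abs_of_pos hapos]
            show ‖u‖⁻¹ * ‖u‖ = 1; exact inv_mul_cancel₀ hnu.ne'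
          have hq : J ((u' : U) : W) ((u' : U) : W) = a ^ 2 * J u u := by
            have huw : ((u' : U) : W) = a • u := rfl
            rw [huw]
            simp [map_smul, sq]; ring
          have hmin : J (x : W) (x : W) ≤ a ^ 2 * J u u := by
            have := isMinOn_iff.mp hxmin u' hu'S
            rwa [hq] at this
          have ha2 : a ^ 2 * ‖u‖ ^ 2 = 1 := by
            rw [ha, inv_pow]; exact inv_mul_cancel₀ (pow_pos hnu 2).ne'
          have step := mul_le_mul_of_nonneg_right hmin (sq_nonneg ‖u‖)
          calc J (x : W) (x : W) * ‖u‖ ^ 2 ≤ a ^ 2 * J u u * ‖u‖ ^ 2 := step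
            _ = J u u * (a ^ 2 * ‖u‖ ^ 2) := by ring
            _ = J u u := by rw [ha2, mul_one]
    obtain ⟨c, hcpos, hc⟩ := hUc
    -- conclude coercivity on W
    refine ⟨min ρ c / 2, by positivity, fun δ => ?_⟩
    obtain ⟨p, hp⟩ := proj δ
    set u : W := δ - (p : W) with hudef
    have huU : u ∈ U := by
      intro v hv
      exact hp ⟨v, hv⟩
    have hδ : δ = (p : W) + u := by rw [hudef]; abel
    have hJvu : J (p : W) u = 0 := by
      rw [hJsymm]; exact huU (p : W) p.2
    have hJuv : J u (p : W) = 0 := huU (p : W) p.2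
    have hsplit : J δ δ = J (p : W) (p : W) + J u u := by
      rw [hδ]
      simp [map_add, hJvu, hJuv]
    have h1 : ρ * ‖(p : W)‖ ^ 2 ≤ J (p : W) (p : W) := hρ (p : W) p.2
    have h2 : c * ‖u‖ ^ 2 ≤ J u u := hc u huU
    have hnorm : ‖δ‖ ≤ ‖(p : W)‖ + ‖u‖ := by rw [hδ]; exact norm_add_le _ _
    have hmin1 : min ρ c ≤ ρ := min_le_left _ _
    have hmin2 : min ρ c ≤ c := min_le_right _ _
    have hminpos : 0 < min ρ c := lt_min hρpos hcpos
    have hA : ‖δ‖ ^ 2 ≤ 2 * (‖(p : W)‖ ^ 2 + ‖u‖ ^ 2) := by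
      have h0 : ‖δ‖ ^ 2 ≤ (‖(p : W)‖ + ‖u‖) ^ 2 :=
        pow_le_pow_left₀ (norm_nonneg δ) hnorm 2
      have h2ab : 2 * ‖(p : W)‖ * ‖u‖ ≤ ‖(p : W)‖ ^ 2 + ‖u‖ ^ 2 :=
        two_mul_le_add_sq _ _
      have hexp : (‖(p : W)‖ + ‖u‖) ^ 2
          = ‖(p : W)‖ ^ 2 + 2 * ‖(p : W)‖ * ‖u‖ + ‖u‖ ^ 2 := by ring
      linarith
    have hB1 : min ρ c * ‖(p : W)‖ ^ 2 ≤ ρ * ‖(p : W)‖ ^ 2 :=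
      mul_le_mul_of_nonneg_right hmin1 (sq_nonneg _)
    have hB2 : min ρ c * ‖u‖ ^ 2 ≤ c * ‖u‖ ^ 2 :=
      mul_le_mul_of_nonneg_right hmin2 (sq_nonneg _)
    calc min ρ c / 2 * ‖δ‖ ^ 2
        ≤ min ρ c / 2 * (2 * (‖(p : W)‖ ^ 2 + ‖u‖ ^ 2)) :=
          mul_le_mul_of_nonneg_left hA (by positivity)
      _ = min ρ c * ‖(p : W)‖ ^ 2 + min ρ c * ‖u‖ ^ 2 := by ring
      _ ≤ ρ * ‖(p : W)‖ ^ 2 + c * ‖u‖ ^ 2 := add_le_add hB1 hB2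
      _ ≤ J (p : W) (p : W) + J u u := add_le_add h1 h2
      _ = J δ δ := hsplit.symm
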